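/- Let n ≥ 1 and let A be a real n×n matrix. Then A is eventually positive if and only if both A and its transpose Aᵀ possess the strong Perron–Frobenius property. -/

import Mathlib

open Polynomial Matrix

/-- The spectral radius of a real matrix: the maximum of the moduli of the complex
roots of its characteristic polynomial. -/
noncomputable def specRadius {n : ℕ} (A : Matrix (Fin n) (Fin n) ℝ) : ℝ :=
  (((A.charpoly.map (algebraMap ℝ ℂ)).roots.map (fun z => ‖z‖₊)).sup : NNReal)

/-- The strong Perron–Frobenius property for a real matrix. -/
def HasStrongPF {n : ℕ} (A : Matrix (Fin n) (Fin n) ℝ) : Prop :=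
  0 < specRadius A ∧
  (A.charpoly.map (algebraMap ℝ ℂ)).rootMultiplicity (specRadius A : ℂ) = 1 ∧
  (∃ x : Fin n → ℝ, (∀ i, 0 < x i) ∧ A.mulVec x = (specRadius A) • x) ∧
  (∀ μ ∈ (A.charpoly.map (algebraMap ℝ ℂ)).roots,
      μ ≠ (specRadius A : ℂ) → ‖μ‖ < specRadius A)

/-- Eventual positivity of a real matrix. -/
def EventuallyPos {n : ℕ} (A : Matrix (Fin n) (Fin n) ℝ) : Prop :=
  ∃ p : ℕ, ∀ k ≥ p, ∀ i j, 0 < (A ^ k) i j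

namespace PF
open Filter


variable {n : ℕ}

/-- complexification of a real matrix -/
noncomputable abbrev cx {n : ℕ} (A : Matrix (Fin n) (Fin n) ℝ) : Matrix (Fin n) (Fin n) ℂ :=
  A.map (algebraMap ℝ ℂ)

noncomputable abbrev pc {n : ℕ} (A : Matrix (Fin n) (Fin n) ℝ) : Polynomial ℂ :=
  A.charpoly.map (algebraMap ℝ ℂ)

lemma pc_eq (A : Matrix (Fin n) (Fin n) ℝ) : pc A = (cx A).charpoly :=
  (Matrix.charpoly_map A (algebraMap ℝ ℂ)).symm

lemma pc_monic (A : Matrix (Fin n) (Fin n) ℝ) : (pc A).Monic :=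
  (Matrix.charpoly_monic A).map _

lemma pc_ne_zero (A : Matrix (Fin n) (Fin n) ℝ) : pc A ≠ 0 :=
  (pc_monic A).ne_zero

lemma pc_natDegree (A : Matrix (Fin n) (Fin n) ℝ) : (pc A).natDegree = n := by
  rw [(Matrix.charpoly_monic A).natDegree_map, Matrix.charpoly_natDegree_eq_dim,
    Fintype.card_fin]

lemma card_roots_pc (A : Matrix (Fin n) (Fin n) ℝ) :
    Multiset.card (pc A).roots = n := by
  rw [(Polynomial.splits_iff_card_roots).mp (IsAlgClosed.splits (k := ℂ) (pc A)),
    pc_natDegree]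

/-- eval of charpoly as a determinant -/
lemma eval_charpoly (M : Matrix (Fin n) (Fin n) ℂ) (μ : ℂ) :
    M.charpoly.eval μ = (Matrix.diagonal (fun _ => μ) - M).det := by
  rw [Matrix.charpoly]
  rw [show Polynomial.eval μ (charmatrix M).det = ((charmatrix M).map (evalRingHom μ)).det from
    RingHom.map_det (evalRingHom μ) (charmatrix M)]
  congr 1
  ext i j
  by_cases h : i = j
  · subst h; simp [charmatrix_apply_eq]
  · simp [charmatrix_apply_ne _ _ _ h, Matrix.diagonal_apply_ne _ h]

lemma isRoot_charpoly_iff_spectrum (M : Matrix (Fin n) (Fin n) ℂ) (μ : ℂ) :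
    M.charpoly.IsRoot μ ↔ μ ∈ spectrum ℂ M := by
  have halg : (algebraMap ℂ (Matrix (Fin n) (Fin n) ℂ)) μ = Matrix.diagonal fun _ => μ := by
    rw [Matrix.algebraMap_eq_diagonal]; rfl
  rw [spectrum.mem_iff, IsRoot, eval_charpoly, halg,
    Matrix.isUnit_iff_isUnit_det, isUnit_iff_ne_zero, not_not]

lemma exists_eigenvector_of_isRoot {M : Matrix (Fin n) (Fin n) ℂ} {μ : ℂ}
    (h : M.charpoly.IsRoot μ) : ∃ v, v ≠ 0 ∧ M.mulVec v = μ • v := by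
  rw [IsRoot, eval_charpoly] at h
  obtain ⟨v, hv0, hv⟩ := (Matrix.exists_mulVec_eq_zero_iff).mpr h
  refine ⟨v, hv0, ?_⟩
  rw [Matrix.sub_mulVec] at hv
  have : Matrix.diagonal (fun _ => μ) *ᵥ v = μ • v := by
    ext i; simp [Matrix.mulVec_diagonal]
  rw [this] at hv
  have := sub_eq_zero.mp hv
  exact this.symm


lemma multiset_sup_mem {s : Multiset NNReal} (hs : s ≠ 0) : s.sup ∈ s := by
  induction s using Multiset.induction_on with
  | empty => exact absurd rfl hs
  | cons a t ih =>
    rw [Multiset.sup_cons]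
    rcases eq_or_ne t 0 with rfl | ht
    · simp
    · rcases le_total a t.sup with h | h
      · rw [sup_eq_right.mpr h]; exact Multiset.mem_cons_of_mem (ih ht)
      · rw [sup_eq_left.mpr h]; exact Multiset.mem_cons_self a t

lemma abs_le_specRadius {A : Matrix (Fin n) (Fin n) ℝ} {μ : ℂ}
    (h : μ ∈ (A.charpoly.map (algebraMap ℝ ℂ)).roots) : ‖μ‖ ≤ specRadius A := by
  have : ‖μ‖₊ ≤ ((A.charpoly.map (algebraMap ℝ ℂ)).roots.map (fun z => ‖z‖₊)).sup :=
    Multiset.le_sup (Multiset.mem_map_of_mem _ h)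
  simpa [specRadius, coe_nnnorm] using NNReal.coe_le_coe.mpr this

lemma specRadius_nonneg (A : Matrix (Fin n) (Fin n) ℝ) : 0 ≤ specRadius A :=
  NNReal.coe_nonneg _

lemma exists_root_abs_eq (hn : 1 ≤ n) (A : Matrix (Fin n) (Fin n) ℝ) :
    ∃ μ ∈ (A.charpoly.map (algebraMap ℝ ℂ)).roots, ‖μ‖ = specRadius A := by
  set s := (A.charpoly.map (algebraMap ℝ ℂ)).roots.map (fun z => ‖z‖₊) with hs
  have hcard : Multiset.card (A.charpoly.map (algebraMap ℝ ℂ)).roots = n := card_roots_pc A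
  have hne : s ≠ 0 := by
    intro h0
    have : Multiset.card s = 0 := by rw [h0]; rfl
    rw [hs, Multiset.card_map, hcard] at this
    omega
  have hmem := multiset_sup_mem hne
  rw [hs] at hmem
  obtain ⟨μ, hμ, hμ2⟩ := Multiset.mem_map.mp hmem
  exact ⟨μ, hμ, by rw [specRadius, ← hs, ← hμ2, coe_nnnorm]⟩

lemma charpoly_transpose (A : Matrix (Fin n) (Fin n) ℝ) : Aᵀ.charpoly = A.charpoly := by
  rw [Matrix.charpoly, Matrix.charpoly, show charmatrix Aᵀ = (charmatrix A)ᵀ from ?_,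
    Matrix.det_transpose]
  ext i j
  by_cases h : i = j
  · subst h; simp [charmatrix_apply_eq]
  · simp [charmatrix_apply_ne _ _ _ h, charmatrix_apply_ne _ _ _ (Ne.symm h)]

lemma specRadius_transpose (A : Matrix (Fin n) (Fin n) ℝ) : specRadius Aᵀ = specRadius A := by
  rw [specRadius, specRadius, charpoly_transpose]


section Proj
variable {A : Matrix (Fin n) (Fin n) ℝ} {ρ : ℝ} {u w : Fin n → ℝ}

lemma hchar (M : Matrix (Fin n) (Fin n) ℝ) :
    charmatrix M = Matrix.diagonal (fun _ => (X : ℝ[X])) - M.map C := by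
  ext i j
  rw [charmatrix_apply]
  simp [Matrix.sub_apply, Matrix.map_apply]

lemma proj_facts (hu : A.mulVec u = ρ • u) (hw : Aᵀ.mulVec w = ρ • w)
    (huw : w ⬝ᵥ u = 1) :
    A * (Matrix.replicateCol (Fin 1) u * Matrix.replicateRow (Fin 1) w)
        = ρ • (Matrix.replicateCol (Fin 1) u * Matrix.replicateRow (Fin 1) w) ∧
    (Matrix.replicateCol (Fin 1) u * Matrix.replicateRow (Fin 1) w) * A
        = ρ • (Matrix.replicateCol (Fin 1) u * Matrix.replicateRow (Fin 1) w) ∧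
    (Matrix.replicateCol (Fin 1) u * Matrix.replicateRow (Fin 1) w) * (Matrix.replicateCol (Fin 1) u * Matrix.replicateRow (Fin 1) w)
        = Matrix.replicateCol (Fin 1) u * Matrix.replicateRow (Fin 1) w := by
  set P : Matrix (Fin n) (Fin n) ℝ := Matrix.replicateCol (Fin 1) u * Matrix.replicateRow (Fin 1) w with hPdef
  have hPapp : ∀ i j, P i j = u i * w j := by
    intro i j; simp [hPdef, Matrix.mul_apply, Matrix.replicateCol_apply, Matrix.replicateRow_apply]
  refine ⟨?_, ?_, ?_⟩
  · ext i j
    simp only [Matrix.mul_apply, hPapp, Matrix.smul_apply, smul_eq_mul]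
    have : ∑ k, A i k * (u k * w j) = (∑ k, A i k * u k) * w j := by
      rw [Finset.sum_mul]; congr 1; ext k; ring
    rw [this, show ∑ k, A i k * u k = ρ * u i from by
      have := congrFun hu i; simpa [Matrix.mulVec, dotProduct] using this]
    ring
  · ext i j
    simp only [Matrix.mul_apply, hPapp, Matrix.smul_apply, smul_eq_mul]
    have : ∑ k, u i * w k * A k j = u i * (∑ k, A k j * w k) := by
      rw [Finset.mul_sum]; congr 1; ext k; ring
    rw [this, show ∑ k, A k j * w k = ρ * w j from by
      have := congrFun hw j
      simpa [Matrix.mulVec, dotProduct, Matrix.transpose_apply, mul_comm] using this]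
    ring
  · ext i j
    simp only [Matrix.mul_apply, hPapp]
    have : ∑ k, u i * w k * (u k * w j) = (u i * w j) * (∑ k, w k * u k) := by
      rw [Finset.mul_sum]; congr 1; ext k; ring
    rw [this, show ∑ k, w k * u k = 1 from by simpa [dotProduct] using huw, mul_one]

lemma key_poly_identity (hu : A.mulVec u = ρ • u) (hw : Aᵀ.mulVec w = ρ • w)
    (huw : w ⬝ᵥ u = 1) :
    (A - ρ • (Matrix.replicateCol (Fin 1) u * Matrix.replicateRow (Fin 1) w)).charpoly * (X - C ρ)
      = A.charpoly * X := by
  set P : Matrix (Fin n) (Fin n) ℝ := Matrix.replicateCol (Fin 1) u * Matrix.replicateRow (Fin 1) w with hPdef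
  have hPapp : ∀ i j, P i j = u i * w j := by
    intro i j; simp [hPdef, Matrix.mul_apply, Matrix.replicateCol_apply, Matrix.replicateRow_apply]
  obtain ⟨hAP, hPA, hPP⟩ := proj_facts hu hw huw
  rw [← hPdef] at hAP hPA hPP
  -- map everything to ℝ[X]
  set Φ := (RingHom.mapMatrix (C : ℝ →+* ℝ[X]) :
    Matrix (Fin n) (Fin n) ℝ →+* Matrix (Fin n) (Fin n) ℝ[X]) with hΦ
  set Pc : Matrix (Fin n) (Fin n) ℝ[X] := P.map C with hPc
  have hΦP : Φ P = Pc := rfl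
  have hsmul : ∀ (a : ℝ) (M : Matrix (Fin n) (Fin n) ℝ), Φ (a • M) = C a • Φ M := by
    intro a M; ext i j : 2
    simp only [hΦ, RingHom.mapMatrix_apply, Matrix.map_apply, Matrix.smul_apply,
      smul_eq_mul, _root_.map_mul]
  have hAPc : (A.map C) * Pc = C ρ • Pc := by
    have := congrArg Φ hAP
    rw [_root_.map_mul, hsmul] at this
    exact this
  have hPAc : Pc * (A.map C) = C ρ • Pc := by
    have := congrArg Φ hPA
    rw [_root_.map_mul, hsmul] at this
    exact this
  have hPPc : Pc * Pc = Pc := by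
    have := congrArg Φ hPP
    rw [_root_.map_mul] at this
    exact this
  have hXPc : Matrix.diagonal (fun _ => (X : ℝ[X])) * Pc = (X : ℝ[X]) • Pc := by
    ext i j; simp [Matrix.diagonal_mul, Matrix.smul_apply, smul_eq_mul]
  have hCAPc : charmatrix A * Pc = ((X : ℝ[X]) - C ρ) • Pc := by
    rw [hchar, Matrix.sub_mul, hXPc, hAPc, sub_smul]
  -- charmatrix of A - ρ • P
  have hcmS : charmatrix (A - ρ • P) = charmatrix A + C ρ • Pc := by
    rw [hchar, hchar]
    have : (A - ρ • P).map C = A.map C - C ρ • Pc := by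
      ext i j : 2
      simp only [Matrix.map_apply, Matrix.sub_apply, Matrix.smul_apply, smul_eq_mul,
        map_sub, _root_.map_mul, hPc]
    rw [this]
    abel
  -- the matrix identity
  have expand : ∀ s : ℝ[X], charmatrix A * (1 + s • Pc)
      = charmatrix A + (s * ((X : ℝ[X]) - C ρ)) • Pc := by
    intro s
    rw [mul_add, mul_one, Matrix.mul_smul, hCAPc, smul_smul]
  have MI : charmatrix (A - ρ • P) * (1 + ((X : ℝ[X]) - C ρ - 1) • Pc)
      = charmatrix A * (1 + ((X : ℝ[X]) - 1) • Pc) := by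
    rw [hcmS, add_mul, expand, expand]
    rw [mul_add, mul_one, Matrix.mul_smul, Matrix.smul_mul, hPPc, smul_smul]
    rw [add_assoc, ← add_smul, ← add_smul]
    congr 2
    ring
  -- determinants
  have hdet := congrArg Matrix.det MI
  rw [Matrix.det_mul, Matrix.det_mul] at hdet
  have hdet1 : ∀ s : ℝ[X], (1 + s • Pc).det = 1 + s := by
    intro s
    have : (1 : Matrix (Fin n) (Fin n) ℝ[X]) + s • Pc
        = 1 + Matrix.replicateCol (Fin 1) (fun i => s * C (u i)) * Matrix.replicateRow (Fin 1) (fun j => C (w j)) := by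
      congr 1
      ext i j : 2
      simp only [hPc, hPapp, Matrix.mul_apply, Matrix.map_apply, Matrix.smul_apply,
        Matrix.replicateCol_apply, Matrix.replicateRow_apply, smul_eq_mul, _root_.map_mul,
        Finset.univ_unique, Finset.sum_singleton]
      ring
    rw [this]
    refine (Matrix.det_one_add_replicateCol_mul_replicateRow (ι := Fin 1) _ _).trans ?_
    have : (fun j => C (w j)) ⬝ᵥ (fun i => s * C (u i)) = s * C (w ⬝ᵥ u) := by
      simp only [dotProduct, Finset.mul_sum, map_sum]
      congr 1; ext k; rw [_root_.map_mul]; ring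
    rw [this, huw, Polynomial.C_1, mul_one]
  rw [hdet1, hdet1] at hdet
  rw [Matrix.charpoly, Matrix.charpoly]
  calc (charmatrix (A - ρ • P)).det * (X - C ρ)
      = (charmatrix (A - ρ • P)).det * (1 + (X - C ρ - 1)) := by ring_nf
    _ = (charmatrix A).det * (1 + (X - 1)) := hdet
    _ = (charmatrix A).det * X := by ring_nf

end Proj

attribute [local instance] Matrix.linftyOpNormedRing Matrix.linftyOpNormedAlgebra
  Matrix.linftyOpNormedAddCommGroup

noncomputable local instance : CompleteSpace (Matrix (Fin n) (Fin n) ℂ) :=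
  FiniteDimensional.complete ℂ _

lemma nnnorm_entry_le (M : Matrix (Fin n) (Fin n) ℂ) (i j : Fin n) : ‖M i j‖₊ ≤ ‖M‖₊ := by
  rw [Matrix.linfty_opNNNorm_def]
  exact le_trans
    (Finset.single_le_sum (f := fun k => ‖M i k‖₊) (fun k _ => zero_le) (Finset.mem_univ j))
    (Finset.le_sup (f := fun i => ∑ j, ‖M i j‖₊) (Finset.mem_univ i))

lemma nnnorm_cx (M : Matrix (Fin n) (Fin n) ℝ) : ‖M.map (algebraMap ℝ ℂ)‖₊ = ‖M‖₊ := by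
  rw [Matrix.linfty_opNNNorm_def, Matrix.linfty_opNNNorm_def]
  congr 1
  funext i
  refine Finset.sum_congr rfl fun j _ => ?_
  simp [Matrix.map_apply]

lemma cx_pow (M : Matrix (Fin n) (Fin n) ℝ) (k : ℕ) :
    (M.map (algebraMap ℝ ℂ)) ^ k = (M ^ k).map (algebraMap ℝ ℂ) := by
  have : ∀ N : Matrix (Fin n) (Fin n) ℝ, N.map (algebraMap ℝ ℂ)
      = (RingHom.mapMatrix (algebraMap ℝ ℂ) : Matrix (Fin n) (Fin n) ℝ →+* _) N := fun _ => rfl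
  rw [this, this, ← map_pow]

lemma eventually_norm_pow_le {M : Matrix (Fin n) (Fin n) ℂ} {r : NNReal}
    (h : spectralRadius ℂ M < (r : ENNReal)) :
    ∀ᶠ k in atTop, ‖M ^ k‖₊ ≤ r ^ k := by
  have hg := spectrum.pow_nnnorm_pow_one_div_tendsto_nhds_spectralRadius M
  have h1 : ∀ᶠ k : ℕ in atTop, ((‖M ^ k‖₊ : ENNReal) ^ (1 / (k : ℝ))) < (r : ENNReal) :=
    hg.eventually_lt_const h
  filter_upwards [h1, eventually_ge_atTop 1] with k hk hk1
  have hk0 : (k : ℝ) ≠ 0 := by positivity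
  have : ((‖M ^ k‖₊ : ENNReal) ^ (1 / (k : ℝ))) ^ (k : ℝ) ≤ ((r : ENNReal)) ^ (k : ℝ) :=
    ENNReal.rpow_le_rpow hk.le (by positivity)
  rw [← ENNReal.rpow_mul, one_div, inv_mul_cancel₀ hk0, ENNReal.rpow_one] at this
  rw [show ((r : ENNReal)) ^ (k : ℝ) = ((r ^ k : NNReal) : ENNReal) by
    rw [ENNReal.rpow_natCast, ENNReal.coe_pow]] at this
  exact_mod_cast this

/-- spectral radius of the complexification is at most `specRadius`. -/
lemma spectralRadius_le (A : Matrix (Fin n) (Fin n) ℝ) :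
    spectralRadius ℂ (A.map (algebraMap ℝ ℂ)) ≤ ((specRadius A).toNNReal : ENNReal) := by
  rw [spectralRadius]
  refine iSup₂_le fun μ hμ => ?_
  rw [← isRoot_charpoly_iff_spectrum, ← pc_eq] at hμ
  have h1 : ‖μ‖ ≤ specRadius A :=
    abs_le_specRadius ((mem_roots (pc_ne_zero A)).mpr hμ)
  rw [ENNReal.coe_le_coe, ← NNReal.coe_le_coe, coe_nnnorm, Real.coe_toNNReal']
  exact le_max_of_le_left (by simpa using h1)

lemma eventuallyPos_of_strongPF (hn : 1 ≤ n) {A : Matrix (Fin n) (Fin n) ℝ}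
    (hA : HasStrongPF A) (hAT : HasStrongPF Aᵀ) : EventuallyPos A := by
  obtain ⟨hρ, hmult, ⟨x, hx, hxe⟩, hdom⟩ := hA
  obtain ⟨-, -, ⟨y, hy, hye⟩, -⟩ := hAT
  set ρ := specRadius A with hρdef
  rw [specRadius_transpose] at hye
  have hFin : Nonempty (Fin n) := ⟨⟨0, hn⟩⟩
  set c : ℝ := y ⬝ᵥ x with hc
  have hcpos : 0 < c := Finset.sum_pos (fun i _ => mul_pos (hy i) (hx i)) Finset.univ_nonempty
  set w : Fin n → ℝ := c⁻¹ • y with hwdef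
  have hwpos : ∀ i, 0 < w i := fun i => by
    have h1 : w i = c⁻¹ * y i := rfl
    rw [h1]; have := hy i; positivity
  have hwe : Aᵀ *ᵥ w = ρ • w := by
    rw [hwdef, Matrix.mulVec_smul, hye, smul_comm]
  have hwx : w ⬝ᵥ x = 1 := by
    rw [hwdef, smul_dotProduct, ← hc, smul_eq_mul, inv_mul_cancel₀ hcpos.ne']
  set P : Matrix (Fin n) (Fin n) ℝ := Matrix.replicateCol (Fin 1) x * Matrix.replicateRow (Fin 1) w with hPdef
  have hPapp : ∀ i j, P i j = x i * w j := by
    intro i j; simp [hPdef, Matrix.mul_apply, Matrix.replicateCol_apply, Matrix.replicateRow_apply]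
  have hPpos : ∀ i j, 0 < P i j := fun i j => by rw [hPapp]; exact mul_pos (hx i) (hwpos j)
  obtain ⟨hAP, hPA, hPP⟩ := proj_facts hxe hwe hwx
  rw [← hPdef] at hAP hPA hPP
  set S : Matrix (Fin n) (Fin n) ℝ := A - ρ • P with hSdef
  have hid := key_poly_identity hxe hwe hwx
  rw [← hPdef, ← hSdef] at hid
  have hSP : S * P = 0 := by
    rw [hSdef, Matrix.sub_mul, hAP, Matrix.smul_mul, hPP, sub_self]
  have hPS : P * S = 0 := by
    rw [hSdef, Matrix.mul_sub, hPA, Matrix.mul_smul, hPP, sub_self]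
  have hSkP : ∀ k, 1 ≤ k → S ^ k * P = 0 := by
    intro k hk
    induction k, hk using Nat.le_induction with
    | base => rw [pow_one, hSP]
    | succ k hk ih => rw [pow_succ, mul_assoc, hSP, Matrix.mul_zero]
  have hA' : A = S + ρ • P := by rw [hSdef]; abel
  have hpow : ∀ k, 1 ≤ k → A ^ k = S ^ k + (ρ ^ k) • P := by
    intro k hk
    induction k, hk using Nat.le_induction with
    | base => simp only [pow_one]; rw [hSdef]; abel
    | succ k hk ih =>
      rw [pow_succ, ih, hA']
      simp only [Matrix.add_mul, Matrix.mul_add, Matrix.mul_smul, Matrix.smul_mul,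
        hSkP k hk, hPS, hPP, smul_zero, zero_add, add_zero, smul_smul, Matrix.zero_mul,
        Matrix.mul_zero]
      simp only [← pow_succ, ← pow_succ']
  -- roots relation over ℂ
  have hmap := congrArg (Polynomial.map (algebraMap ℝ ℂ)) hid
  rw [Polynomial.map_mul, Polynomial.map_mul, Polynomial.map_sub, Polynomial.map_X,
    Polynomial.map_C] at hmap
  have halgρ : (algebraMap ℝ ℂ) ρ = (ρ : ℂ) := rfl
  rw [halgρ] at hmap
  have hXsub_ne : (X - C (ρ : ℂ)) ≠ 0 := X_sub_C_ne_zero _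
  have hX_ne : (X : Polynomial ℂ) ≠ 0 := X_ne_zero
  have hrr : (S.charpoly.map (algebraMap ℝ ℂ)).roots + {(ρ : ℂ)}
      = (A.charpoly.map (algebraMap ℝ ℂ)).roots + {0} := by
    have h1 := congrArg Polynomial.roots hmap
    rw [Polynomial.roots_mul (mul_ne_zero (pc_ne_zero S) hXsub_ne),
      Polynomial.roots_mul (mul_ne_zero (pc_ne_zero A) hX_ne),
      Polynomial.roots_X_sub_C, Polynomial.roots_X] at h1
    exact h1
  have hSroots : ∀ μ ∈ (S.charpoly.map (algebraMap ℝ ℂ)).roots, ‖μ‖ < ρ := by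
    intro μ hμ
    rcases eq_or_ne μ 0 with rfl | hμ0
    · simpa using hρ
    have hcnt := congrArg (Multiset.count μ) hrr
    rw [Multiset.count_add, Multiset.count_add, Multiset.count_singleton,
      Multiset.count_singleton, if_neg hμ0] at hcnt
    by_cases hμρ : μ = (ρ : ℂ)
    · exfalso
      rw [if_pos hμρ, add_zero] at hcnt
      have h2 : 2 ≤ Multiset.count μ (A.charpoly.map (algebraMap ℝ ℂ)).roots := by
        have : 1 ≤ Multiset.count μ (S.charpoly.map (algebraMap ℝ ℂ)).roots :=
          Multiset.one_le_count_iff_mem.mpr hμ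
        omega
      rw [hμρ, Polynomial.count_roots, hmult] at h2
      omega
    · rw [if_neg hμρ, add_zero, add_zero] at hcnt
      have : μ ∈ (A.charpoly.map (algebraMap ℝ ℂ)).roots := by
        rw [← Multiset.one_le_count_iff_mem, ← hcnt]
        exact Multiset.one_le_count_iff_mem.mpr hμ
      exact hdom μ this hμρ
  -- spectral radius of complexified S is < ρ
  have hspecne : (spectrum ℂ (S.map (algebraMap ℝ ℂ))).Nonempty := by
    have hcard := card_roots_pc S
    have : (S.charpoly.map (algebraMap ℝ ℂ)).roots ≠ 0 := by
      intro h0; rw [h0] at hcard; simp at hcard; omega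
    obtain ⟨μ, hμ⟩ := Multiset.exists_mem_of_ne_zero this
    refine ⟨μ, ?_⟩
    rw [← isRoot_charpoly_iff_spectrum, ← pc_eq]
    exact (Polynomial.mem_roots (pc_ne_zero S)).mp hμ
  have hsr : spectralRadius ℂ (S.map (algebraMap ℝ ℂ)) < ((ρ.toNNReal : NNReal) : ENNReal) := by
    refine spectrum.spectralRadius_lt_of_forall_lt_of_nonempty hspecne fun k hk => ?_
    rw [← isRoot_charpoly_iff_spectrum, ← pc_eq] at hk
    have hlt : ‖k‖ < ρ :=
      hSroots k ((Polynomial.mem_roots (pc_ne_zero S)).mpr hk)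
    rw [← NNReal.coe_lt_coe, coe_nnnorm, Real.coe_toNNReal _ hρ.le]
    simpa using hlt
  obtain ⟨r, hsr_r, hrρE⟩ := ENNReal.lt_iff_exists_nnreal_btwn.mp hsr
  have hrρ : (r : ℝ) < ρ := by
    have := ENNReal.coe_lt_coe.mp hrρE
    have h2 := NNReal.coe_lt_coe.mpr this
    rwa [Real.coe_toNNReal _ hρ.le] at h2
  have hKev := eventually_norm_pow_le (M := S.map (algebraMap ℝ ℂ)) hsr_r
  -- epsilon
  have hne : (Finset.univ : Finset (Fin n × Fin n)).Nonempty := Finset.univ_nonempty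
  set ε : ℝ := Finset.inf' Finset.univ hne (fun p : Fin n × Fin n => P p.1 p.2) with hε
  have hεpos : 0 < ε := by
    rw [hε, Finset.lt_inf'_iff]
    exact fun p _ => hPpos p.1 p.2
  have hεle : ∀ i j, ε ≤ P i j := fun i j =>
    Finset.inf'_le _ (Finset.mem_univ (i, j))
  have htend : Filter.Tendsto (fun k => ((r : ℝ) / ρ) ^ k) atTop (nhds 0) :=
    tendsto_pow_atTop_nhds_zero_of_lt_one (by positivity) (by rw [div_lt_one hρ]; exact hrρ)
  have hev2 : ∀ᶠ k in atTop, ((r : ℝ) / ρ) ^ k < ε := htend.eventually_lt_const hεpos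
  have hfinal : ∀ᶠ k in atTop, ∀ i j, 0 < (A ^ k) i j := by
    filter_upwards [hKev, hev2, eventually_ge_atTop 1] with k h1 h2 hk1
    intro i j
    have hSk : |(S ^ k) i j| ≤ (r : ℝ) ^ k := by
      have hnn : ‖(S ^ k) i j‖₊ ≤ r ^ k := by
        calc ‖(S ^ k) i j‖₊ = ‖((S ^ k).map (algebraMap ℝ ℂ)) i j‖₊ := by
              simp [Matrix.map_apply]
          _ ≤ ‖(S ^ k).map (algebraMap ℝ ℂ)‖₊ := nnnorm_entry_le _ i j
          _ = ‖(S.map (algebraMap ℝ ℂ)) ^ k‖₊ := by rw [cx_pow]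
          _ ≤ r ^ k := h1
      have := NNReal.coe_le_coe.mpr hnn
      rwa [coe_nnnorm, Real.norm_eq_abs, NNReal.coe_pow] at this
    have hPk : (r : ℝ) ^ k < ρ ^ k * P i j := by
      have h3 : ((r : ℝ) / ρ) ^ k < P i j := lt_of_lt_of_le h2 (hεle i j)
      rw [div_pow, div_lt_iff₀ (by positivity)] at h3
      linarith [h3]
    rw [hpow k hk1, Matrix.add_apply, Matrix.smul_apply, smul_eq_mul]
    have := neg_abs_le ((S ^ k) i j)
    linarith
  obtain ⟨p, hp⟩ := Filter.eventually_atTop.mp hfinal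
  exact ⟨p, hp⟩

lemma mulVec_mono {M : Matrix (Fin n) (Fin n) ℝ} (hM : ∀ i j, 0 ≤ M i j)
    {v w : Fin n → ℝ} (h : ∀ i, v i ≤ w i) : ∀ i, (M *ᵥ v) i ≤ (M *ᵥ w) i := by
  intro i
  simp only [Matrix.mulVec, dotProduct]
  exact Finset.sum_le_sum fun j _ => mul_le_mul_of_nonneg_left (h j) (hM i j)

lemma mulVec_pos {M : Matrix (Fin n) (Fin n) ℝ} (hM : ∀ i j, 0 < M i j)
    {v : Fin n → ℝ} (hv : ∀ i, 0 ≤ v i) (hvne : v ≠ 0) : ∀ i, 0 < (M *ᵥ v) i := by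
  obtain ⟨j0, hj0⟩ : ∃ j0, 0 < v j0 := by
    by_contra h
    push_neg at h
    exact hvne (funext fun i => le_antisymm (h i) (hv i))
  intro i
  simp only [Matrix.mulVec, dotProduct]
  refine Finset.sum_pos' (fun j _ => mul_nonneg (hM i j).le (hv j)) ?_
  exact ⟨j0, Finset.mem_univ j0, mul_pos (hM i j0) hj0⟩

lemma pow_add_pos (hn : 1 ≤ n) {M : Matrix (Fin n) (Fin n) ℝ} {a b : ℕ}
    (ha : ∀ i j, 0 < (M ^ a) i j) (hb : ∀ i j, 0 < (M ^ b) i j) :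
    ∀ i j, 0 < (M ^ (a + b)) i j := by
  have hFin : Nonempty (Fin n) := ⟨⟨0, hn⟩⟩
  intro i j
  rw [pow_add, Matrix.mul_apply]
  exact Finset.sum_pos (fun k _ => mul_pos (ha i k) (hb k j)) Finset.univ_nonempty

/-- Core lemma: a nonnegative nonzero vector which is `ρ^K`-subinvariant for a strictly
positive power `A^K` is actually invariant, provided the complex spectral radius of `A`
is at most `ρ`. -/
lemma subinv_eq (hn : 1 ≤ n) {A : Matrix (Fin n) (Fin n) ℝ} {ρ : ℝ} (hρ : 0 < ρ)
    (hsrle : spectralRadius ℂ (A.map (algebraMap ℝ ℂ)) ≤ ((ρ.toNNReal : NNReal) : ENNReal))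
    {K : ℕ} (hK : 1 ≤ K) (hpos : ∀ i j, 0 < (A ^ K) i j)
    {u : Fin n → ℝ} (hu0 : ∀ i, 0 ≤ u i) (hune : u ≠ 0)
    (hsub : ∀ i, ρ ^ K * u i ≤ ((A ^ K) *ᵥ u) i) :
    (A ^ K) *ᵥ u = (ρ ^ K) • u := by
  have hFin : Nonempty (Fin n) := ⟨⟨0, hn⟩⟩
  by_contra hne
  have hpos2 : ∀ i j, 0 < (A ^ (2 * K)) i j := by
    rw [two_mul]; exact pow_add_pos hn hpos hpos
  set d : Fin n → ℝ := (A ^ K) *ᵥ u - (ρ ^ K) • u with hd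
  have hd0 : ∀ i, 0 ≤ d i := fun i => by
    simpa [hd, Pi.sub_apply, smul_eq_mul] using sub_nonneg.mpr (hsub i)
  have hdne : d ≠ 0 := sub_ne_zero.mpr hne
  have hAd : ∀ i, 0 < ((A ^ K) *ᵥ d) i := mulVec_pos hpos hd0 hdne
  have h2K : ∀ i, ρ ^ (2 * K) * u i < ((A ^ (2 * K)) *ᵥ u) i := by
    intro i
    have hsplit : (A ^ (2 * K)) *ᵥ u = (A ^ K) *ᵥ ((A ^ K) *ᵥ u) := by
      rw [Matrix.mulVec_mulVec, ← pow_add, two_mul]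
    have hrw : (A ^ K) *ᵥ u = (ρ ^ K) • u + d := by rw [hd]; abel
    have h1 : ρ ^ K * (ρ ^ K * u i) ≤ ρ ^ K * ((A ^ K) *ᵥ u) i :=
      mul_le_mul_of_nonneg_left (hsub i) (by positivity)
    have h2 := hAd i
    have hform : ((A ^ K) *ᵥ ((ρ ^ K) • u + d)) i
        = ρ ^ K * ((A ^ K) *ᵥ u) i + ((A ^ K) *ᵥ d) i := by
      rw [Matrix.mulVec_add, Matrix.mulVec_smul]
      simp [Pi.add_apply, smul_eq_mul]
    rw [hsplit, hrw, hform]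
    have : ρ ^ (2 * K) * u i = ρ ^ K * (ρ ^ K * u i) := by
      rw [two_mul, pow_add]; ring
    rw [this]
    linarith
  have h2K0 : ∀ i, 0 ≤ ((A ^ (2 * K)) *ᵥ u) i := by
    intro i
    simp only [Matrix.mulVec, dotProduct]
    exact Finset.sum_nonneg fun j _ => mul_nonneg (hpos2 i j).le (hu0 j)
  set g : Fin n → ℝ := fun i =>
    if 0 < u i then ((A ^ (2 * K)) *ᵥ u) i / (ρ ^ (2 * K) * u i) else 2 with hg
  set η : ℝ := Finset.inf' Finset.univ Finset.univ_nonempty g with hη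
  have hη1 : 1 < η := by
    rw [hη, Finset.lt_inf'_iff]
    intro i _
    rw [hg]
    dsimp only
    by_cases h : 0 < u i
    · rw [if_pos h, lt_div_iff₀ (by positivity)]
      simpa using h2K i
    · rw [if_neg h]; norm_num
  have hη0 : (0:ℝ) < η := lt_trans zero_lt_one hη1
  have hηu : ∀ i, η * (ρ ^ (2 * K) * u i) ≤ ((A ^ (2 * K)) *ᵥ u) i := by
    intro i
    by_cases h : 0 < u i
    · have hgi : η ≤ g i := Finset.inf'_le _ (Finset.mem_univ i)
      rw [hg] at hgi
      dsimp only at hgi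
      rw [if_pos h] at hgi
      rw [← le_div_iff₀ (by positivity)]
      exact hgi
    · have hui : u i = 0 := le_antisymm (not_lt.mp h) (hu0 i)
      rw [hui, mul_zero, mul_zero]
      exact h2K0 i
  set cc : ℝ := η * ρ ^ (2 * K) with hcc
  have hcc0 : 0 < cc := mul_pos hη0 (by positivity)
  have hiter : ∀ m : ℕ, ∀ i, cc ^ m * u i ≤ (((A ^ (2 * K)) ^ m) *ᵥ u) i := by
    intro m
    induction m with
    | zero => intro i; simp
    | succ m ih =>
      intro i
      have hsplit : ((A ^ (2 * K)) ^ (m + 1)) *ᵥ u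
          = (A ^ (2 * K)) *ᵥ (((A ^ (2 * K)) ^ m) *ᵥ u) := by
        rw [Matrix.mulVec_mulVec, ← pow_succ']
      have hmono := mulVec_mono (M := A ^ (2 * K)) (fun i j => (hpos2 i j).le)
        (v := (cc ^ m) • u) (w := ((A ^ (2 * K)) ^ m) *ᵥ u)
        (fun j => by simpa [smul_eq_mul] using ih j) i
      rw [Matrix.mulVec_smul] at hmono
      rw [hsplit]
      refine le_trans ?_ hmono
      simp only [Pi.smul_apply, smul_eq_mul]
      calc cc ^ (m + 1) * u i = cc ^ m * (η * (ρ ^ (2 * K) * u i)) := by rw [hcc]; ring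
        _ ≤ cc ^ m * ((A ^ (2 * K)) *ᵥ u) i :=
            mul_le_mul_of_nonneg_left (hηu i) (pow_nonneg hcc0.le m)
  obtain ⟨i0, hi0⟩ : ∃ i0, 0 < u i0 := by
    by_contra h
    push_neg at h
    exact hune (funext fun i => le_antisymm (h i) (hu0 i))
  -- choose r strictly between ρ and the growth rate
  have hKpos : (0:ℝ) < (K : ℝ) := by exact_mod_cast hK
  set t : ℝ := η ^ ((4 * (K:ℝ))⁻¹) with ht
  have ht1 : 1 < t :=
    (Real.one_lt_rpow_iff_of_pos hη0).mpr (Or.inl ⟨hη1, by positivity⟩)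
  set r : ℝ := ρ * t with hr
  have hρr : ρ < r := by
    rw [hr]
    nth_rewrite 1 [← mul_one ρ]
    exact mul_lt_mul_of_pos_left ht1 hρ
  have hr0 : 0 < r := lt_trans hρ hρr
  have hr2K : r ^ (2 * K) < cc := by
    have ht2K : t ^ (2 * K) = η ^ ((1:ℝ)/2) := by
      rw [ht, ← Real.rpow_natCast (η ^ ((4 * (K:ℝ))⁻¹)) (2 * K), ← Real.rpow_mul hη0.le]
      congr 1
      push_cast
      field_simp
      ring
    have hη12 : η ^ ((1:ℝ)/2) < η := by
      nth_rewrite 2 [← Real.rpow_one η]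
      exact (Real.rpow_lt_rpow_left_iff hη1).mpr (by norm_num)
    rw [hr, mul_pow, ht2K, hcc]
    calc ρ ^ (2*K) * η ^ ((1:ℝ)/2) < ρ ^ (2*K) * η :=
          mul_lt_mul_of_pos_left hη12 (by positivity)
      _ = η * ρ ^ (2*K) := by ring
  have hsr' : spectralRadius ℂ (A.map (algebraMap ℝ ℂ)) < ((r.toNNReal : NNReal) : ENNReal) := by
    refine lt_of_le_of_lt hsrle ?_
    exact_mod_cast ENNReal.coe_lt_coe.mpr ((Real.toNNReal_lt_toNNReal_iff hr0).mpr hρr)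
  have hKev := eventually_norm_pow_le hsr'
  have hmul_tendsto : Filter.Tendsto (fun m : ℕ => 2 * K * m) atTop atTop := by
    refine Filter.tendsto_atTop_atTop_of_monotone (fun a b h => Nat.mul_le_mul_left _ h) ?_
    intro b
    exact ⟨b, Nat.le_mul_of_pos_left b (by omega)⟩
  have hKev2 : ∀ᶠ m : ℕ in atTop,
      ‖(A.map (algebraMap ℝ ℂ)) ^ (2 * K * m)‖₊ ≤ r.toNNReal ^ (2 * K * m) :=
    hmul_tendsto.eventually hKev
  have hgt1 : 1 < cc / r ^ (2 * K) := (one_lt_div (by positivity)).mpr hr2K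
  have hev3 : ∀ᶠ m : ℕ in atTop, ‖u‖ / u i0 < (cc / r ^ (2 * K)) ^ m :=
    (tendsto_pow_atTop_atTop_of_one_lt hgt1).eventually_gt_atTop _
  obtain ⟨m, hm1, hm2⟩ := (hKev2.and hev3).exists
  -- lower bound on the norm
  have hlow : cc ^ m * u i0 ≤ ((A ^ (2 * K * m)) *ᵥ u) i0 := by
    have := hiter m i0
    rwa [← pow_mul] at this
  have hup : ((A ^ (2 * K * m)) *ᵥ u) i0 ≤ ‖A ^ (2 * K * m)‖ * ‖u‖ := by
    refine le_trans (le_abs_self _) (le_trans ?_ (Matrix.linfty_opNorm_mulVec _ _))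
    rw [← Real.norm_eq_abs]
    exact norm_le_pi_norm _ i0
  have hnormr : ‖A ^ (2 * K * m)‖ ≤ r ^ (2 * K * m) := by
    have h1 : ‖A ^ (2 * K * m)‖₊ ≤ r.toNNReal ^ (2 * K * m) := by
      rw [← nnnorm_cx, ← cx_pow]
      exact hm1
    have := NNReal.coe_le_coe.mpr h1
    rwa [coe_nnnorm, NNReal.coe_pow, Real.coe_toNNReal _ hr0.le] at this
  have hfin : cc ^ m * u i0 ≤ r ^ (2 * K * m) * ‖u‖ := by
    calc cc ^ m * u i0 ≤ ((A ^ (2 * K * m)) *ᵥ u) i0 := hlow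
      _ ≤ ‖A ^ (2 * K * m)‖ * ‖u‖ := hup
      _ ≤ r ^ (2 * K * m) * ‖u‖ := by
          have hu_nonneg : 0 ≤ ‖u‖ := norm_nonneg u
          exact mul_le_mul_of_nonneg_right hnormr hu_nonneg
  have hcontra : (cc / r ^ (2 * K)) ^ m ≤ ‖u‖ / u i0 := by
    rw [div_pow, div_le_div_iff₀ (by positivity) hi0]
    calc cc ^ m * u i0 ≤ r ^ (2 * K * m) * ‖u‖ := hfin
      _ = ‖u‖ * (r ^ (2 * K)) ^ m := by rw [← pow_mul]; ring
  exact absurd hcontra (not_le.mpr hm2)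

lemma mulVec_pow_eigen {M : Matrix (Fin n) (Fin n) ℂ} {μ : ℂ} {v : Fin n → ℂ}
    (h : M *ᵥ v = μ • v) : ∀ k, (M ^ k) *ᵥ v = (μ ^ k) • v := by
  intro k
  induction k with
  | zero => simp
  | succ k ih =>
    rw [pow_succ, ← Matrix.mulVec_mulVec, h, Matrix.mulVec_smul, ih, smul_smul, ← pow_succ']

lemma cx_mulVec_coe (M : Matrix (Fin n) (Fin n) ℝ) (z : Fin n → ℝ) (i : Fin n) :
    ((M.map (algebraMap ℝ ℂ)) *ᵥ (fun j => ((z j : ℝ) : ℂ))) i = (((M *ᵥ z) i : ℝ) : ℂ) := by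
  simp only [Matrix.mulVec, dotProduct, Matrix.map_apply]
  push_cast
  rfl

lemma abs_subinv {A : Matrix (Fin n) (Fin n) ℝ} {k : ℕ} (hpos : ∀ i j, 0 < (A ^ k) i j)
    {μ : ℂ} {v : Fin n → ℂ} (hv : (A.map (algebraMap ℝ ℂ)) *ᵥ v = μ • v) :
    ∀ i, ‖μ‖ ^ k * ‖v i‖ ≤ ((A ^ k) *ᵥ (fun j => ‖v j‖)) i := by
  intro i
  have hk := mulVec_pow_eigen hv k
  rw [cx_pow] at hk
  have hentry : (((A ^ k).map (algebraMap ℝ ℂ)) *ᵥ v) i = μ ^ k * v i := by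
    rw [hk]; simp
  have hsum : (((A ^ k).map (algebraMap ℝ ℂ)) *ᵥ v) i
      = ∑ j, ((A ^ k) i j : ℂ) * v j := by
    simp [Matrix.mulVec, dotProduct, Matrix.map_apply]
  have h1 : ‖μ‖ ^ k * ‖v i‖ = ‖∑ j, ((A ^ k) i j : ℂ) * v j‖ := by
    rw [← hsum, hentry, norm_mul, norm_pow]
  rw [h1]
  calc ‖∑ j, ((A ^ k) i j : ℂ) * v j‖ ≤ ∑ j, ‖((A ^ k) i j : ℂ) * v j‖ :=
        norm_sum_le _ _
    _ = ∑ j, (A ^ k) i j * ‖v j‖ := by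
        refine Finset.sum_congr rfl fun j _ => ?_
        rw [norm_mul, Complex.norm_real, Real.norm_eq_abs, abs_of_pos (hpos i j)]
    _ = ((A ^ k) *ᵥ (fun j => ‖v j‖)) i := by
        simp [Matrix.mulVec, dotProduct]

lemma triangle_eq {c : Fin n → ℝ} (hc : ∀ j, 0 < c j) {v : Fin n → ℂ}
    (h : ‖∑ j, (c j : ℂ) * v j‖ = ∑ j, c j * ‖v j‖) :
    ∃ dir : ℂ, ‖dir‖ = 1 ∧ ∀ j, v j = (‖v j‖ : ℂ) * dir := by
  rcases eq_or_ne v 0 with rfl | hvne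
  · exact ⟨1, norm_one, fun j => by simp⟩
  set a : Fin n → ℂ := fun j => (c j : ℂ) * v j with ha
  set S : ℂ := ∑ j, a j with hS
  have hnormS : ‖S‖ = ∑ j, ‖a j‖ := by
    rw [hS, h]
    refine Finset.sum_congr rfl fun j _ => ?_
    rw [ha]
    rw [norm_mul, Complex.norm_real, Real.norm_eq_abs, abs_of_pos (hc j)]
  have hSne : S ≠ 0 := by
    obtain ⟨j0, hj0⟩ : ∃ j0, v j0 ≠ 0 := Function.ne_iff.mp hvne
    intro h0
    rw [h0, norm_zero] at hnormS
    have : ∀ j ∈ Finset.univ, ‖a j‖ = 0 :=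
      (Finset.sum_eq_zero_iff_of_nonneg (fun j _ => norm_nonneg _)).mp hnormS.symm
    have := this j0 (Finset.mem_univ j0)
    rw [ha, norm_eq_zero] at this
    exact hj0 (by
      have := mul_eq_zero.mp this
      rcases this with h1 | h1
      · exact absurd h1 (by exact_mod_cast (hc j0).ne')
      · exact h1)
  have hray : ∀ j, SameRay ℝ (a j) S := by
    intro j
    have hT : S = a j + (S - a j) := by ring
    have htri : ‖a j + (S - a j)‖ = ‖a j‖ + ‖S - a j‖ := by
      have hub : ‖S - a j‖ ≤ ∑ k ∈ Finset.univ.erase j, ‖a k‖ := by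
        have : S - a j = ∑ k ∈ Finset.univ.erase j, a k := by
          rw [hS, ← Finset.sum_erase_add Finset.univ a (Finset.mem_univ j)]
          ring
        rw [this]
        exact norm_sum_le _ _
      have hsplit : ∑ j, ‖a j‖ = ‖a j‖ + ∑ k ∈ Finset.univ.erase j, ‖a k‖ := by
        rw [← Finset.sum_erase_add Finset.univ _ (Finset.mem_univ j)]
        ring
      have hge : ‖a j‖ + ‖S - a j‖ ≤ ‖a j‖ + ∑ k ∈ Finset.univ.erase j, ‖a k‖ := by
        linarith
      have hle : ‖S‖ ≤ ‖a j‖ + ‖S - a j‖ := by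
        calc ‖S‖ = ‖a j + (S - a j)‖ := by rw [← hT]
          _ ≤ ‖a j‖ + ‖S - a j‖ := norm_add_le _ _
      rw [← hT]
      have : ‖S‖ = ∑ j, ‖a j‖ := hnormS
      linarith
    have hsr := sameRay_iff_norm_add.mpr htri
    have h3 : SameRay ℝ (a j) (a j + (S - a j)) := SameRay.rfl.add_right hsr
    rwa [← hT] at h3
  refine ⟨S / ‖S‖, ?_, ?_⟩
  · rw [norm_div, Complex.norm_real, Real.norm_eq_abs, abs_of_pos (norm_pos_iff.mpr hSne),
      div_self (norm_ne_zero_iff.mpr hSne)]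
  · intro j
    have hcj : (c j : ℂ) ≠ 0 := by exact_mod_cast (hc j).ne'
    have hSnorm_ne : (‖S‖ : ℝ) ≠ 0 := norm_ne_zero_iff.mpr hSne
    obtain ⟨t, ht0, hta⟩ := (hray j).exists_nonneg_right hSne
    have hta' : (c j : ℂ) * v j = (t : ℂ) * S := by
      have : a j = (t : ℂ) * S := by rw [hta, Complex.real_smul]
      rw [ha] at this
      exact this
    have hvj : v j = ((c j)⁻¹ * t : ℝ) * S := by
      have h2 := congrArg (fun z => (c j : ℂ)⁻¹ * z) hta'
      simp only [← mul_assoc, inv_mul_cancel₀ hcj, one_mul] at h2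
      rw [h2]
      push_cast
      ring
    have hnorm : ‖v j‖ = (c j)⁻¹ * t * ‖S‖ := by
      rw [hvj, norm_mul, Complex.norm_real, Real.norm_eq_abs,
        abs_of_nonneg (mul_nonneg (inv_nonneg.mpr (hc j).le) ht0)]
    have hSC : ((‖S‖ : ℝ) : ℂ) ≠ 0 := Complex.ofReal_ne_zero.mpr hSnorm_ne
    have habs : ((‖S‖ : ℝ) : ℂ) ≠ 0 := by
      exact hSC
    rw [hnorm, hvj]
    push_cast
    field_simp [habs]

lemma specRadius_pos (hn : 1 ≤ n) {A : Matrix (Fin n) (Fin n) ℝ}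
    (hEP : EventuallyPos A) : 0 < specRadius A := by
  obtain ⟨p, hp⟩ := hEP
  rcases lt_or_ge 0 (specRadius A) with h | h
  · exact h
  exfalso
  have hallzero : ∀ μ ∈ (A.charpoly.map (algebraMap ℝ ℂ)).roots, μ = 0 := by
    intro μ hμ
    have h1 := abs_le_specRadius hμ
    have h2 : ‖μ‖ = 0 := le_antisymm (le_trans h1 h) (norm_nonneg _)
    exact norm_eq_zero.mp h2
  have hroots : (A.charpoly.map (algebraMap ℝ ℂ)).roots = Multiset.replicate n 0 := by
    rw [Multiset.eq_replicate]
    exact ⟨card_roots_pc A, hallzero⟩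
  have hcpX : A.charpoly.map (algebraMap ℝ ℂ) = X ^ n := by
    have hsp := (IsAlgClosed.splits _).eq_prod_roots_of_monic (pc_monic A)
    rw [hroots] at hsp
    simpa [Multiset.map_replicate, Multiset.prod_replicate] using hsp
  have hcpR : A.charpoly = X ^ n := by
    have hinj := Polynomial.map_injective (algebraMap ℝ ℂ) (algebraMap ℝ ℂ).injective
    apply hinj
    rw [hcpX, Polynomial.map_pow, Polynomial.map_X]
  have hAn : A ^ n = 0 := by
    have := Matrix.aeval_self_charpoly A
    rw [hcpR] at this
    simpa using this
  have hk := hp (p + n) (Nat.le_add_right p n)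
  have hzero : A ^ (p + n) = 0 := by
    rw [pow_add, hAn, Matrix.mul_zero]
  have := hk ⟨0, hn⟩ ⟨0, hn⟩
  rw [hzero] at this
  simp at this

lemma eig_mod_aligned (hn : 1 ≤ n) {A : Matrix (Fin n) (Fin n) ℝ} {p : ℕ} (hp1 : 1 ≤ p)
    (hpos : ∀ k, p ≤ k → ∀ i j, 0 < (A ^ k) i j) (hρpos : 0 < specRadius A)
    {μ : ℂ} (habs : ‖μ‖ = specRadius A)
    {v : Fin n → ℂ} (hvne : v ≠ 0) (hv : (A.map (algebraMap ℝ ℂ)) *ᵥ v = μ • v) :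
    (∀ k, p ≤ k → (A ^ k) *ᵥ (fun j => ‖v j‖) = ((specRadius A) ^ k) • (fun j => ‖v j‖)) ∧
    (∃ dir : ℂ, ‖dir‖ = 1 ∧ ∀ j, v j = (‖v j‖ : ℂ) * dir) ∧
    (∀ j, 0 < ‖v j‖) := by
  set ρ := specRadius A with hρdef
  set u : Fin n → ℝ := fun j => ‖v j‖ with hu
  have hu0 : ∀ i, 0 ≤ u i := fun i => norm_nonneg _
  have hune : u ≠ 0 := by
    intro h0
    apply hvne
    funext i
    have := congrFun h0 i
    simpa [hu, norm_eq_zero] using this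
  have heq : ∀ k, p ≤ k → (A ^ k) *ᵥ u = (ρ ^ k) • u := by
    intro k hk
    have hsub := abs_subinv (hpos k hk) hv
    rw [habs] at hsub
    exact subinv_eq hn hρpos (spectralRadius_le A) (le_trans hp1 hk) (hpos k hk) hu0 hune hsub
  have hupos : ∀ j, 0 < u j := by
    intro j
    have h1 := mulVec_pos (hpos p le_rfl) hu0 hune j
    rw [heq p le_rfl] at h1
    simp only [Pi.smul_apply, smul_eq_mul] at h1
    have hp' : 0 < ρ ^ p := pow_pos hρpos p
    nlinarith [hu0 j]
  set i0 : Fin n := ⟨0, hn⟩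
  have htr : ‖∑ j, (((A ^ p) i0 j : ℝ) : ℂ) * v j‖ = ∑ j, (A ^ p) i0 j * ‖v j‖ := by
    have h1 : ∑ j, (((A ^ p) i0 j : ℝ) : ℂ) * v j = μ ^ p * v i0 := by
      have hk := mulVec_pow_eigen hv p
      rw [cx_pow] at hk
      have h2 := congrFun hk i0
      simpa [Matrix.mulVec, dotProduct, Matrix.map_apply] using h2
    rw [h1, norm_mul, norm_pow]
    have h2 : (∑ j, (A ^ p) i0 j * ‖v j‖) = ((A ^ p) *ᵥ u) i0 := by
      simp [Matrix.mulVec, dotProduct, hu]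
    rw [h2, heq p le_rfl]
    simp only [Pi.smul_apply, smul_eq_mul]
    rw [habs]
  obtain ⟨dir, hdir1, hdirv⟩ := triangle_eq (fun j => hpos p le_rfl i0 j) htr
  exact ⟨heq, ⟨dir, hdir1, hdirv⟩, hupos⟩

lemma pow_eq_of_aligned (hn : 1 ≤ n) {A : Matrix (Fin n) (Fin n) ℝ} {p : ℕ} (hp1 : 1 ≤ p)
    (hpos : ∀ k, p ≤ k → ∀ i j, 0 < (A ^ k) i j) (hρpos : 0 < specRadius A)
    {μ : ℂ} (habs : ‖μ‖ = specRadius A)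
    {v : Fin n → ℂ} (hvne : v ≠ 0) (hv : (A.map (algebraMap ℝ ℂ)) *ᵥ v = μ • v) :
    μ = ((specRadius A : ℝ) : ℂ) := by
  set ρ := specRadius A with hρdef
  obtain ⟨heq, ⟨dir, hdir1, hdirv⟩, hupos⟩ :=
    eig_mod_aligned hn hp1 hpos hρpos habs hvne hv
  have hdirne : dir ≠ 0 := by
    intro h0
    rw [h0, norm_zero] at hdir1
    norm_num at hdir1
  set i0 : Fin n := ⟨0, hn⟩
  have hvi0ne : ((‖v i0‖ : ℝ) : ℂ) ≠ 0 := by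
    exact_mod_cast (hupos i0).ne'
  have hμk : ∀ k, p ≤ k → μ ^ k = ((ρ : ℝ) : ℂ) ^ k := by
    intro k hk
    have h1 := mulVec_pow_eigen hv k
    rw [cx_pow] at h1
    have hR := congrFun h1 i0
    have hL : (((A ^ k).map (algebraMap ℝ ℂ)) *ᵥ v) i0
        = (((ρ ^ k * ‖v i0‖ : ℝ)) : ℂ) * dir := by
      have hsum : (((A ^ k).map (algebraMap ℝ ℂ)) *ᵥ v) i0
          = ∑ j, (((A ^ k) i0 j : ℝ) : ℂ) * v j := by
        simp [Matrix.mulVec, dotProduct, Matrix.map_apply]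
      rw [hsum]
      have hterm : ∀ j, (((A ^ k) i0 j : ℝ) : ℂ) * v j
          = (((A ^ k) i0 j * ‖v j‖ : ℝ) : ℂ) * dir := by
        intro j
        conv_lhs => rw [hdirv j]
        push_cast
        ring
      rw [Finset.sum_congr rfl (fun j _ => hterm j), ← Finset.sum_mul]
      congr 1
      rw [← Complex.ofReal_sum]
      congr 1
      have h2 : (∑ j, (A ^ k) i0 j * ‖v j‖) = ((A ^ k) *ᵥ (fun j => ‖v j‖)) i0 := by
        simp [Matrix.mulVec, dotProduct]
      rw [h2, heq k hk]
      simp [hρdef]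
    rw [hL, Pi.smul_apply, smul_eq_mul] at hR
    nth_rewrite 2 [hdirv i0] at hR
    have hR' : ((ρ : ℝ) : ℂ) ^ k * ((‖v i0‖ : ℝ) : ℂ) * dir
        = μ ^ k * ((‖v i0‖ : ℝ) : ℂ) * dir := by
      push_cast at hR ⊢
      linear_combination hR
    have := mul_right_cancel₀ hdirne hR'
    have := mul_right_cancel₀ hvi0ne this
    exact this.symm
  have hμne : μ ≠ 0 := by
    intro h0
    rw [h0] at habs
    simp at habs
    exact hρpos.ne habs
  have h1 := hμk p le_rfl
  have h2 := hμk (p + 1) (Nat.le_succ_of_le le_rfl)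
  rw [pow_succ, pow_succ, h1] at h2
  exact mul_left_cancel₀ (pow_ne_zero p (by exact_mod_cast hρpos.ne')) h2

lemma dom_strict (hn : 1 ≤ n) {A : Matrix (Fin n) (Fin n) ℝ} {p : ℕ} (hp1 : 1 ≤ p)
    (hpos : ∀ k, p ≤ k → ∀ i j, 0 < (A ^ k) i j) (hρpos : 0 < specRadius A) :
    ∀ μ ∈ (A.charpoly.map (algebraMap ℝ ℂ)).roots, μ ≠ ((specRadius A : ℝ) : ℂ) →
      ‖μ‖ < specRadius A := by
  intro μ hμ hne
  rcases lt_or_eq_of_le (abs_le_specRadius hμ) with h | h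
  · exact h
  exfalso
  have hisroot : ((A.map (algebraMap ℝ ℂ)).charpoly).IsRoot μ := by
    rw [← pc_eq]
    exact (Polynomial.mem_roots (pc_ne_zero A)).mp hμ
  obtain ⟨v, hvne, hv⟩ := exists_eigenvector_of_isRoot hisroot
  exact hne (pow_eq_of_aligned hn hp1 hpos hρpos h hvne hv)

lemma exists_pos_eigen (hn : 1 ≤ n) {A : Matrix (Fin n) (Fin n) ℝ} {p : ℕ} (hp1 : 1 ≤ p)
    (hpos : ∀ k, p ≤ k → ∀ i j, 0 < (A ^ k) i j) (hρpos : 0 < specRadius A) :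
    ∃ x : Fin n → ℝ, (∀ i, 0 < x i) ∧ A *ᵥ x = specRadius A • x := by
  set ρ := specRadius A with hρdef
  obtain ⟨μ, hμmem, hμabs⟩ := exists_root_abs_eq hn A
  have hisroot : ((A.map (algebraMap ℝ ℂ)).charpoly).IsRoot μ := by
    rw [← pc_eq]
    exact (Polynomial.mem_roots (pc_ne_zero A)).mp hμmem
  obtain ⟨v, hvne, hv⟩ := exists_eigenvector_of_isRoot hisroot
  obtain ⟨heq, _, hupos⟩ := eig_mod_aligned hn hp1 hpos hρpos hμabs hvne hv
  set u : Fin n → ℝ := fun j => ‖v j‖ with hu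
  refine ⟨u, hupos, ?_⟩
  have h1 := heq p le_rfl
  have h2 := heq (p + 1) (Nat.le_succ_of_le le_rfl)
  have h3 : A *ᵥ ((A ^ p) *ᵥ u) = (A ^ (p + 1)) *ᵥ u := by
    rw [Matrix.mulVec_mulVec, ← pow_succ']
  rw [h1, h2, Matrix.mulVec_smul] at h3
  have h4 : (ρ ^ (p + 1)) • u = (ρ ^ p) • (ρ • u) := by
    rw [smul_smul, ← pow_succ]
  rw [h4] at h3
  exact smul_right_injective (Fin n → ℝ) (pow_ne_zero p hρpos.ne') h3

lemma EP_data {A : Matrix (Fin n) (Fin n) ℝ} (hEP : EventuallyPos A) :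
    ∃ p, 1 ≤ p ∧ ∀ k, p ≤ k → ∀ i j, 0 < (A ^ k) i j := by
  obtain ⟨p, hp⟩ := hEP
  exact ⟨p + 1, by omega, fun k hk => hp k (by omega)⟩

lemma eventuallyPos_transpose {A : Matrix (Fin n) (Fin n) ℝ} (hEP : EventuallyPos A) :
    EventuallyPos Aᵀ := by
  obtain ⟨p, hp⟩ := hEP
  refine ⟨p, fun k hk i j => ?_⟩
  rw [← Matrix.transpose_pow, Matrix.transpose_apply]
  exact hp k hk j i

lemma mult_one (hn : 1 ≤ n) {A : Matrix (Fin n) (Fin n) ℝ}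
    (hEP : EventuallyPos A) (hEPT : EventuallyPos Aᵀ) :
    (A.charpoly.map (algebraMap ℝ ℂ)).rootMultiplicity ((specRadius A : ℝ) : ℂ) = 1 := by
  obtain ⟨p, hp1, hpos⟩ := EP_data hEP
  obtain ⟨q, hq1, hposT⟩ := EP_data hEPT
  have hρ := specRadius_pos hn hEP
  have hρT : 0 < specRadius Aᵀ := by rw [specRadius_transpose]; exact hρ
  set ρ := specRadius A with hρdef
  have hFin : Nonempty (Fin n) := ⟨⟨0, hn⟩⟩
  obtain ⟨x, hx, hxe⟩ := exists_pos_eigen hn hp1 hpos hρ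
  obtain ⟨y, hy, hye0⟩ := exists_pos_eigen hn hq1 hposT hρT
  have hye : Aᵀ *ᵥ y = ρ • y := by rw [specRadius_transpose] at hye0; exact hye0
  set c : ℝ := y ⬝ᵥ x with hc
  have hcpos : 0 < c := Finset.sum_pos (fun i _ => mul_pos (hy i) (hx i)) Finset.univ_nonempty
  set w : Fin n → ℝ := c⁻¹ • y with hwdef
  have hwpos : ∀ i, 0 < w i := fun i => by
    have h1 : w i = c⁻¹ * y i := rfl
    rw [h1]; have := hy i; positivity
  have hwe : Aᵀ *ᵥ w = ρ • w := by
    rw [hwdef, Matrix.mulVec_smul, hye, smul_comm]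
  have hwx : w ⬝ᵥ x = 1 := by
    rw [hwdef, smul_dotProduct, ← hc, smul_eq_mul, inv_mul_cancel₀ hcpos.ne']
  set P : Matrix (Fin n) (Fin n) ℝ := Matrix.replicateCol (Fin 1) x * Matrix.replicateRow (Fin 1) w with hPdef
  have hPapp : ∀ i j, P i j = x i * w j := by
    intro i j; simp [hPdef, Matrix.mul_apply, Matrix.replicateCol_apply, Matrix.replicateRow_apply]
  have hPpos : ∀ i j, 0 < P i j := fun i j => by rw [hPapp]; exact mul_pos (hx i) (hwpos j)
  obtain ⟨hAP, hPA, hPP⟩ := proj_facts hxe hwe hwx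
  rw [← hPdef] at hAP hPA hPP
  set S : Matrix (Fin n) (Fin n) ℝ := A - ρ • P with hSdef
  have hid := key_poly_identity hxe hwe hwx
  rw [← hPdef, ← hSdef] at hid
  have hPS : P * S = 0 := by
    rw [hSdef, Matrix.mul_sub, hPA, Matrix.mul_smul, hPP, sub_self]
  -- roots relation
  have hmap := congrArg (Polynomial.map (algebraMap ℝ ℂ)) hid
  rw [Polynomial.map_mul, Polynomial.map_mul, Polynomial.map_sub, Polynomial.map_X,
    Polynomial.map_C] at hmap
  have halgρ : (algebraMap ℝ ℂ) ρ = (ρ : ℂ) := rfl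
  rw [halgρ] at hmap
  have hrr : (S.charpoly.map (algebraMap ℝ ℂ)).roots + {(ρ : ℂ)}
      = (A.charpoly.map (algebraMap ℝ ℂ)).roots + {0} := by
    have h1 := congrArg Polynomial.roots hmap
    rw [Polynomial.roots_mul (mul_ne_zero (pc_ne_zero S) (X_sub_C_ne_zero _)),
      Polynomial.roots_mul (mul_ne_zero (pc_ne_zero A) X_ne_zero),
      Polynomial.roots_X_sub_C, Polynomial.roots_X] at h1
    exact h1
  -- ρ is not a root of the charpoly of S
  have hnotroot : ((ρ : ℝ) : ℂ) ∉ (S.charpoly.map (algebraMap ℝ ℂ)).roots := by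
    intro hmem
    have hisroot : ((S.map (algebraMap ℝ ℂ)).charpoly).IsRoot ((ρ : ℝ) : ℂ) := by
      rw [← pc_eq]
      exact (Polynomial.mem_roots (pc_ne_zero S)).mp hmem
    obtain ⟨v, hvne, hv⟩ := exists_eigenvector_of_isRoot hisroot
    -- P kills v
    have hPSc : (P.map (algebraMap ℝ ℂ)) * (S.map (algebraMap ℝ ℂ)) = 0 := by
      have := congrArg (fun M : Matrix (Fin n) (Fin n) ℝ =>
        (RingHom.mapMatrix (algebraMap ℝ ℂ) :
          Matrix (Fin n) (Fin n) ℝ →+* Matrix (Fin n) (Fin n) ℂ) M) hPS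
      simpa [RingHom.mapMatrix_apply, _root_.map_mul] using this
    have hPv : (P.map (algebraMap ℝ ℂ)) *ᵥ v = 0 := by
      have h1 : (P.map (algebraMap ℝ ℂ)) *ᵥ ((S.map (algebraMap ℝ ℂ)) *ᵥ v) = 0 := by
        rw [Matrix.mulVec_mulVec, hPSc, Matrix.zero_mulVec]
      rw [hv, Matrix.mulVec_smul] at h1
      have hρc : ((ρ : ℝ) : ℂ) ≠ 0 := by exact_mod_cast hρ.ne'
      exact (smul_eq_zero.mp h1).resolve_left hρc
    -- v is a ρ-eigenvector of A
    have hcxA : A.map (algebraMap ℝ ℂ)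
        = S.map (algebraMap ℝ ℂ) + ((ρ : ℝ) : ℂ) • P.map (algebraMap ℝ ℂ) := by
      ext i j : 2
      simp only [Matrix.map_apply, Matrix.add_apply, Matrix.smul_apply, hSdef,
        Matrix.sub_apply, smul_eq_mul, Complex.coe_algebraMap]
      push_cast
      ring
    have hAv : (A.map (algebraMap ℝ ℂ)) *ᵥ v = ((ρ : ℝ) : ℂ) • v := by
      rw [hcxA, Matrix.add_mulVec, hv, Matrix.smul_mulVec, hPv, smul_zero, add_zero]
    have habsρ : ‖((ρ : ℝ) : ℂ)‖ = ρ := by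
      rw [Complex.norm_real, Real.norm_eq_abs, abs_of_pos hρ]
    obtain ⟨heq, ⟨dir, hdir1, hdirv⟩, hupos⟩ :=
      eig_mod_aligned hn hp1 hpos hρ habsρ hvne hAv
    have hdirne : dir ≠ 0 := by
      intro h0; rw [h0, norm_zero] at hdir1; norm_num at hdir1
    set i0 : Fin n := ⟨0, hn⟩
    have h0 := congrFun hPv i0
    have hsum : ((P.map (algebraMap ℝ ℂ)) *ᵥ v) i0
        = ((∑ j, P i0 j * ‖v j‖ : ℝ) : ℂ) * dir := by
      simp only [Matrix.mulVec, dotProduct, Matrix.map_apply]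
      push_cast
      rw [Finset.sum_mul]
      refine Finset.sum_congr rfl fun j _ => ?_
      conv_lhs => rw [hdirv j]
      simp only [Complex.coe_algebraMap]
      ring
    rw [hsum] at h0
    have hsumpos : 0 < ∑ j, P i0 j * ‖v j‖ :=
      Finset.sum_pos (fun j _ => mul_pos (hPpos i0 j) (hupos j)) Finset.univ_nonempty
    have : ((∑ j, P i0 j * ‖v j‖ : ℝ) : ℂ) ≠ 0 := by exact_mod_cast hsumpos.ne'
    exact (mul_ne_zero this hdirne) (by simpa using h0)
  -- count multiplicities
  have hcnt := congrArg (Multiset.count ((ρ : ℝ) : ℂ)) hrr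
  have hρc0 : ((ρ : ℝ) : ℂ) ≠ 0 := by exact_mod_cast hρ.ne'
  rw [Multiset.count_add, Multiset.count_add, Multiset.count_singleton, if_pos rfl,
    Multiset.count_singleton, if_neg hρc0, Multiset.count_eq_zero.mpr hnotroot] at hcnt
  rw [← Polynomial.count_roots]
  omega

end PF

/-- A real matrix is eventually positive iff both it and its transpose possess
the strong Perron–Frobenius property. -/
theorem eventuallyPos_iff_strongPF {n : ℕ} (hn : 1 ≤ n)
    (A : Matrix (Fin n) (Fin n) ℝ) :
    EventuallyPos A ↔ HasStrongPF A ∧ HasStrongPF Aᵀ := by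
  constructor
  · intro hEP
    have hEPT : EventuallyPos Aᵀ := PF.eventuallyPos_transpose hEP
    obtain ⟨p, hp1, hpos⟩ := PF.EP_data hEP
    obtain ⟨q, hq1, hposT⟩ := PF.EP_data hEPT
    have hρ := PF.specRadius_pos hn hEP
    have hρT : 0 < specRadius Aᵀ := by rw [PF.specRadius_transpose]; exact hρ
    have hmultT : (Aᵀ.charpoly.map (algebraMap ℝ ℂ)).rootMultiplicity
        ((specRadius Aᵀ : ℝ) : ℂ) = 1 :=
      PF.mult_one hn hEPT (by rwa [Matrix.transpose_transpose])
    exact ⟨⟨hρ, PF.mult_one hn hEP hEPT, PF.exists_pos_eigen hn hp1 hpos hρ,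
      PF.dom_strict hn hp1 hpos hρ⟩,
      ⟨hρT, hmultT, PF.exists_pos_eigen hn hq1 hposT hρT,
      PF.dom_strict hn hq1 hposT hρT⟩⟩
  · rintro ⟨hA, hAT⟩
    exact PF.eventuallyPos_of_strongPF hn hA hAT
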